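/- Let m ≥ 1 and let X ⊆ ℝ^m be a countable conical limit set. Then every subset Y ⊆ X is also a conical limit set. -/

import Mathlib

open Filter Topology

/-- The open upper half-space over a normed space `V`: pairs `(t, v)` with `t > 0`. -/
def upperHalf (V : Type*) [NormedAddCommGroup V] : Set (ℝ × V) := {p | 0 < p.1}

/-- The conical limit set of `E ⊆ ℝ × V`: points `x` for which there are `C > 0` and a
sequence `(t_n, v_n)` in `E` with `t_n → 0`, `v_n → x` and `‖v_n - x‖ ≤ C * t_n`. -/
def conicalLimitSet {V : Type*} [NormedAddCommGroup V] (E : Set (ℝ × V)) : Set V :=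
  {x | ∃ C > 0, ∃ w : ℕ → ℝ × V, (∀ n, w n ∈ E) ∧
    Tendsto (fun n => (w n).1) atTop (𝓝 (0 : ℝ)) ∧
    Tendsto (fun n => (w n).2) atTop (𝓝 x) ∧
    ∀ n, ‖(w n).2 - x‖ ≤ C * (w n).1}

/-- `X ⊆ V` is a conical limit set if it is the conical limit set of some subset of the
upper half-space. -/
def IsConicalLimitSet {V : Type*} [NormedAddCommGroup V] (X : Set V) : Prop :=
  ∃ E ⊆ upperHalf V, conicalLimitSet E = X

/-- Every subset of a countable conical limit set in `ℝ^m` is a conical limit set. -/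
theorem subset_of_countable_conicalLimitSet (m : ℕ) (hm : 1 ≤ m)
    (X : Set (EuclideanSpace ℝ (Fin m))) (hX : IsConicalLimitSet X)
    (hc : X.Countable) (Y : Set (EuclideanSpace ℝ (Fin m))) (hY : Y ⊆ X) :
    IsConicalLimitSet Y := by
  classical
  obtain ⟨E, hE, hXE⟩ := hX
  by_cases hYne : Y.Nonempty
  · -- enumerate Y
    obtain ⟨y, hy⟩ := (hc.mono hY).exists_eq_range hYne
    have hyk : ∀ k, y k ∈ Y := fun k => hy ▸ Set.mem_range_self k
    have hwit : ∀ k : ℕ, y k ∈ conicalLimitSet E := fun k => hXE ▸ hY (hyk k)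
    choose C hCpos w hwE hwt hwv hwb using hwit
    -- enumerate a superset of X \ Y
    have hSc : (insert (y 0) (X \ Y)).Countable := ((hc.mono Set.diff_subset).insert _)
    obtain ⟨g, hg⟩ := hSc.exists_eq_range (Set.insert_nonempty _ _)
    have hgsub : X \ Y ⊆ Set.range g := by rw [← hg]; exact Set.subset_insert _ _
    -- thresholds
    set ρ : ℕ → ℕ → ℝ := fun k l => if g l ∈ Y then 1 else ‖g l - y k‖ / (k + C k + 1)
      with hρdef
    have hρpos : ∀ k l, 0 < ρ k l := by
      intro k l
      by_cases h : g l ∈ Y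
      · simp [hρdef, h]
      · have hne : g l - y k ≠ 0 := sub_ne_zero.mpr fun hh => h (hh ▸ hyk k)
        have h1 : 0 < ‖g l - y k‖ := norm_pos_iff.mpr hne
        have h2 : (0:ℝ) < (k : ℝ) + C k + 1 := by have := hCpos k; positivity
        simp only [hρdef, h, if_false]
        exact div_pos h1 h2
    set τ : ℕ → ℝ := fun k =>
      min 1 ((Finset.range (k+1)).inf' (Finset.nonempty_range_iff.mpr (Nat.succ_ne_zero k)) (ρ k))
      with hτdef
    have hτpos : ∀ k, 0 < τ k := by
      intro k
      refine lt_min one_pos ?_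
      rw [Finset.lt_inf'_iff]
      intro l _
      exact hρpos k l
    have hτle : ∀ k l, l ≤ k → τ k ≤ ρ k l := by
      intro k l hlk
      exact (min_le_right _ _).trans
        (Finset.inf'_le _ (Finset.mem_range.mpr (Nat.lt_succ_of_le hlk)))
    -- the pruned set
    refine ⟨{p | ∃ k j, (w k j).1 < τ k ∧ p = w k j}, ?_, ?_⟩
    · rintro p ⟨k, j, -, rfl⟩
      exact hE (hwE k j)
    ext x
    constructor
    · rintro ⟨Cx, hCx, p, hpE', hpt, hpv, hpb⟩
      choose k j hsmall hpw using hpE'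
      have hxX : x ∈ X := hXE ▸ ⟨Cx, hCx, p, fun n => (hpw n) ▸ hwE (k n) (j n), hpt, hpv, hpb⟩
      by_contra hxY
      obtain ⟨l, hl⟩ := hgsub ⟨hxX, hxY⟩
      have hglY : g l ∉ Y := hl ▸ hxY
      -- key capture bound
      have hkey : ∀ n, ‖g l - y (k n)‖ ≤ (Cx + C (k n)) * (p n).1 := by
        intro n
        have h1 : ‖g l - (p n).2‖ ≤ Cx * (p n).1 := by
          rw [hl, ← norm_sub_rev]; exact hpb n
        have h2 : ‖(p n).2 - y (k n)‖ ≤ C (k n) * (p n).1 := by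
          have := hwb (k n) (j n)
          rw [hpw n]; exact this
        calc ‖g l - y (k n)‖ ≤ ‖g l - (p n).2‖ + ‖(p n).2 - y (k n)‖ := by
              simpa using norm_sub_le_norm_sub_add_norm_sub (g l) ((p n).2) (y (k n))
          _ ≤ Cx * (p n).1 + C (k n) * (p n).1 := add_le_add h1 h2
          _ = (Cx + C (k n)) * (p n).1 := by ring
      have hpt0 : ∀ n, 0 < (p n).1 := fun n => by
        rw [hpw n]; exact hE (hwE (k n) (j n))
      have hdlpos : ∀ k', 0 < ‖g l - y k'‖ := by
        intro k'
        exact norm_pos_iff.mpr (sub_ne_zero.mpr fun hh => hglY (hh ▸ hyk k'))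
      set K : ℕ := max (l + 1) ⌈Cx⌉₊ with hKdef
      have hKne : (Finset.range K).Nonempty :=
        ⟨l, Finset.mem_range.mpr (lt_of_lt_of_le (Nat.lt_succ_self l) (le_max_left _ _))⟩
      set δ : ℝ := (Finset.range K).inf' hKne (fun k' => ‖g l - y k'‖ / (Cx + C k')) with hδdef
      have hδpos : 0 < δ := by
        rw [hδdef, Finset.lt_inf'_iff]
        intro k' _
        exact div_pos (hdlpos k') (by have := hCpos k'; linarith)
      have hlower : ∀ n, δ ≤ (p n).1 := by
        intro n
        by_cases hkn : k n < K
        · refine (Finset.inf'_le _ (Finset.mem_range.mpr hkn)).trans ?_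
          rw [div_le_iff₀ (by have := hCpos (k n); linarith)]
          rw [mul_comm]
          exact hkey n
        · exfalso
          push_neg at hkn
          have hlkn : l ≤ k n := le_trans (Nat.le_of_succ_le (le_max_left _ _)) hkn
          have hCxkn : Cx ≤ (k n : ℝ) + 1 := by
            have h1 : Cx ≤ (⌈Cx⌉₊ : ℝ) := Nat.le_ceil Cx
            have h2 : (⌈Cx⌉₊ : ℝ) ≤ (k n : ℝ) :=
              Nat.cast_le.mpr (le_trans (le_max_right _ _) hkn)
            linarith
          have hts : (p n).1 < τ (k n) := by rw [hpw n]; exact hsmall n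
          have hρval : ρ (k n) l = ‖g l - y (k n)‖ / ((k n : ℝ) + C (k n) + 1) := by
            simp [hρdef, hglY]
          have hden : (0:ℝ) < (k n : ℝ) + C (k n) + 1 := by
            have := hCpos (k n); positivity
          have ht2 : (p n).1 < ‖g l - y (k n)‖ / ((k n : ℝ) + C (k n) + 1) := by
            calc (p n).1 < τ (k n) := hts
              _ ≤ ρ (k n) l := hτle (k n) l hlkn
              _ = _ := hρval
          have h3 : ((k n : ℝ) + C (k n) + 1) * (p n).1 < ‖g l - y (k n)‖ := by
            rw [mul_comm, ← lt_div_iff₀ hden]; exact ht2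
          have h4 : ‖g l - y (k n)‖ ≤ ((k n : ℝ) + C (k n) + 1) * (p n).1 := by
            refine (hkey n).trans ?_
            have := (hpt0 n).le
            nlinarith [hCpos (k n)]
          linarith
      have := hpt.eventually (gt_mem_nhds hδpos)
      obtain ⟨n, hn⟩ := this.exists
      exact absurd (hlower n) (not_le.mpr hn)
    · intro hx
      obtain ⟨k, rfl⟩ : ∃ k, y k = x := by rw [hy] at hx; exact hx
      have hev : ∀ᶠ j in atTop, (w k j).1 < τ k := (hwt k).eventually (gt_mem_nhds (hτpos k))
      obtain ⟨N, hN⟩ := eventually_atTop.mp hev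
      refine ⟨C k, hCpos k, fun n => w k (n + N), ?_, ?_, ?_, ?_⟩
      · exact fun n => ⟨k, n + N, hN _ (Nat.le_add_left N n), rfl⟩
      · exact (tendsto_add_atTop_iff_nat N).mpr (hwt k)
      · exact (tendsto_add_atTop_iff_nat N).mpr (hwv k)
      · exact fun n => hwb k (n + N)
  · rw [Set.not_nonempty_iff_eq_empty] at hYne
    refine ⟨∅, Set.empty_subset _, ?_⟩
    rw [hYne, Set.eq_empty_iff_forall_notMem]
    rintro x ⟨Cx, hCx, p, hpE, -⟩
    exact hpE 0
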